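/- Let x ∈ D and let n_0 ≥ 0 be the smallest integer such that x ∈ D_{n_0+1}. Then for every integer n > 2n_0 and every real h with 0 < 2|h| < 2^{−n}, one has T(x + h) − T(x) ≥ (n − 2n_0)·|h|. -/
import Mathlib


open MeasureTheory Filter Set

noncomputable section

/-- The set of dyadic numbers of level `n`: `{k / 2^n : k ∈ ℤ}`. -/
def Dset (n : ℕ) : Set ℝ := {y : ℝ | ∃ k : ℤ, y = (k : ℝ) / 2 ^ n}

/-- The set of all dyadic numbers. -/
def Ddyadic : Set ℝ := ⋃ n, Dset n

/-- `g k x = dist(x, D_k)`. -/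
def g (k : ℕ) (x : ℝ) : ℝ := Metric.infDist x (Dset k)

/-- The Takagi function `T x = ∑_{k=1}^∞ g_k(x)`. -/
def T (x : ℝ) : ℝ := ∑' k : ℕ, g (k + 1) x

/-- `G' n x = g_1'(x) + ⋯ + g_n'(x)` (so `G' 0 x = 0`). -/
def G' (n : ℕ) (x : ℝ) : ℝ := ∑ k ∈ Finset.range n, deriv (g (k + 1)) x

/-- `f` is approximately derivable at `x` with approximate derivative `L`:
for every `ε > 0`, the relative measure of the set of points `y` in `(x - r, x + r)`,
`y ≠ x`, where `|(f y - f x - L (y - x)) / (y - x)| ≥ ε`, divided by `2r`,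
tends to `0` as `r → 0⁺`. -/
def ApproxDerivAt (f : ℝ → ℝ) (x L : ℝ) : Prop :=
  ∀ ε > (0 : ℝ), Tendsto
    (fun r : ℝ => volume (Ioo (x - r) (x + r) ∩
        {y : ℝ | y ≠ x ∧ ε ≤ |(f y - f x - L * (y - x)) / (y - x)|}) /
      ENNReal.ofReal (2 * r))
    (nhdsWithin 0 (Ioi 0)) (nhds 0)

lemma Dset_nonempty (k : ℕ) : (Dset k).Nonempty := ⟨0, 0, by simp⟩

lemma Dset_mono {m k : ℕ} (hmk : m ≤ k) : Dset m ⊆ Dset k := by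
  rintro y ⟨j, rfl⟩
  refine ⟨j * 2 ^ (k - m), ?_⟩
  push_cast
  rw [div_eq_div_iff (by positivity) (by positivity), mul_assoc, ← pow_add]
  congr 2
  omega

lemma g_nonneg (k : ℕ) (y : ℝ) : 0 ≤ g k y := Metric.infDist_nonneg

lemma g_le (k : ℕ) (y : ℝ) : g k y ≤ ((2:ℝ)^k)⁻¹ := by
  have hmem : (⌊y * 2^k⌋ : ℝ) / 2^k ∈ Dset k := ⟨⌊y * 2^k⌋, rfl⟩
  calc g k y ≤ dist y ((⌊y * 2^k⌋ : ℝ) / 2^k) := Metric.infDist_le_dist_of_mem hmem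
    _ ≤ ((2:ℝ)^k)⁻¹ := by
        have hp : (0:ℝ) < 2^k := by positivity
        have key : y - (⌊y * 2^k⌋ : ℝ) / 2^k = (y * 2^k - ⌊y * 2^k⌋) / 2^k := by
          field_simp
        have h1 := Int.floor_le (y * 2^k)
        have h2 := Int.lt_floor_add_one (y * 2^k)
        rw [Real.dist_eq, key, abs_div, abs_of_pos hp, inv_eq_one_div]
        gcongr
        rw [abs_le]
        constructor <;> linarith

lemma g_lipschitz (k : ℕ) (a b : ℝ) : |g k a - g k b| ≤ |a - b| := by
  rw [abs_sub_le_iff]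
  constructor <;>
  · have := Metric.infDist_le_infDist_add_dist (x := a) (y := b) (s := Dset k)
    have := Metric.infDist_le_infDist_add_dist (x := b) (y := a) (s := Dset k)
    rw [Real.dist_eq] at *
    simp only [g]
    first
    | linarith [abs_sub_comm a b]
    | linarith [abs_sub_comm a b]

lemma g_mem (k : ℕ) {y : ℝ} (hy : y ∈ Dset k) : g k y = 0 :=
  Metric.infDist_zero_of_mem hy

lemma g_add (k : ℕ) {x h : ℝ} (hx : x ∈ Dset k) (hh : 2 * |h| ≤ ((2:ℝ)^k)⁻¹) :
    g k (x + h) = |h| := by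
  obtain ⟨i, rfl⟩ := hx
  have hp : (0:ℝ) < 2^k := by positivity
  apply le_antisymm
  · calc g k ((i:ℝ)/2^k + h) ≤ dist ((i:ℝ)/2^k + h) ((i:ℝ)/2^k) :=
        Metric.infDist_le_dist_of_mem ⟨i, rfl⟩
      _ = |h| := by rw [Real.dist_eq]; ring_nf
  · by_contra hlt
    push_neg at hlt
    obtain ⟨y, hy, hdy⟩ := (Metric.infDist_lt_iff (Dset_nonempty k)).1 hlt
    obtain ⟨j, rfl⟩ := hy
    rw [Real.dist_eq] at hdy
    rw [← not_le] at hdy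
    apply hdy
    rcases eq_or_ne i j with rfl | hij
    · have : (i:ℝ)/2^k + h - (i:ℝ)/2^k = h := by ring
      rw [this]
    · have hd : (1:ℝ) ≤ |(i:ℝ) - j| := by
        rw [← Int.cast_sub, ← Int.cast_abs]
        exact_mod_cast Int.one_le_abs (by omega)
      have h1 : ((2:ℝ)^k)⁻¹ ≤ |(i:ℝ)/2^k - (j:ℝ)/2^k| := by
        rw [div_sub_div_same, abs_div, abs_of_pos hp, inv_eq_one_div]
        gcongr
      have h2 : |(i:ℝ)/2^k - (j:ℝ)/2^k| - |h| ≤ |(i:ℝ)/2^k + h - (j:ℝ)/2^k| := by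
        have := abs_sub_abs_le_abs_sub ((i:ℝ)/2^k - (j:ℝ)/2^k) (-h)
        rw [sub_neg_eq_add, abs_neg] at this
        calc |(i:ℝ)/2^k - (j:ℝ)/2^k| - |h| ≤ |(i:ℝ)/2^k - (j:ℝ)/2^k + h| := this
          _ = |(i:ℝ)/2^k + h - (j:ℝ)/2^k| := by ring_nf
      linarith

lemma g_summable (y : ℝ) : Summable (fun k : ℕ => g (k + 1) y) := by
  apply Summable.of_nonneg_of_le (fun k => g_nonneg _ _) (fun k => ?_)
    (summable_geometric_of_lt_one (by norm_num : (0:ℝ) ≤ 1/2) (by norm_num))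
  calc g (k+1) y ≤ ((2:ℝ)^(k+1))⁻¹ := g_le _ _
    _ ≤ (1/2)^k := by
        rw [one_div, ← inv_pow]
        apply pow_le_pow_of_le_one (by norm_num) (by norm_num)
        omega

theorem takagi_dyadic_increment' (x : ℝ)
    (n0 : ℕ) (hx : x ∈ Dset (n0 + 1)) :
    ∀ n : ℕ, 2 * n0 < n → ∀ h : ℝ, 0 < 2 * |h| → 2 * |h| < ((2 : ℝ) ^ n)⁻¹ →
      ((n : ℝ) - 2 * n0) * |h| ≤ T (x + h) - T x := by
  intro n hn h hpos hsmall
  have hn0n : n0 < n := by omega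
  have hxk : ∀ k : ℕ, n0 ≤ k → x ∈ Dset (k + 1) := fun k hk => Dset_mono (by omega) hx
  have hTx : T x = ∑ k ∈ Finset.range n, g (k + 1) x := by
    refine tsum_eq_sum (fun k hk => g_mem _ (hxk k ?_))
    simp only [Finset.mem_range, not_lt] at hk; omega
  have hTxh : ∑ k ∈ Finset.range n, g (k + 1) (x + h) ≤ T (x + h) :=
    Summable.sum_le_tsum _ (fun k _ => g_nonneg _ _) (g_summable _)
  have key : ((n : ℝ) - 2 * n0) * |h| ≤
      ∑ k ∈ Finset.range n, (g (k + 1) (x + h) - g (k + 1) x) := by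
    have hb : ∀ k ∈ Finset.range n,
        (if k < n0 then -|h| else |h|) ≤ g (k + 1) (x + h) - g (k + 1) x := by
      intro k hk
      simp only [Finset.mem_range] at hk
      split_ifs with hkn0
      · have hl := g_lipschitz (k + 1) (x + h) x
        rw [add_sub_cancel_left] at hl
        have := (abs_le.1 hl).1
        have := g_nonneg (k + 1) x
        have hub : g (k + 1) x ≤ |h| + g (k+1) (x+h) := by
          linarith [(abs_le.1 hl).2]
        linarith
      · have hmem := hxk k (not_lt.1 hkn0)
        have hhk : 2 * |h| ≤ ((2:ℝ) ^ (k + 1))⁻¹ := by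
          have h2 : (2:ℝ) ^ (k + 1) ≤ 2 ^ n := by
            apply pow_le_pow_right₀ (by norm_num); omega
          have := inv_anti₀ (by positivity : (0:ℝ) < 2 ^ (k + 1)) h2
          linarith
        rw [g_add _ hmem hhk, g_mem _ hmem, sub_zero]
    calc ((n : ℝ) - 2 * n0) * |h|
        ≤ ∑ k ∈ Finset.range n, (if k < n0 then -|h| else |h|) := by
          rw [Finset.sum_ite]
          rw [Finset.sum_const, Finset.sum_const]
          have c1 : ((Finset.range n).filter (fun k => k < n0)).card = n0 := by
            rw [show (Finset.range n).filter (fun k => k < n0) = Finset.range n0 by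
              ext a; simp; omega]
            simp
          have c2 : ((Finset.range n).filter (fun k => ¬ k < n0)).card = n - n0 := by
            rw [show (Finset.range n).filter (fun k => ¬ k < n0) = Finset.Ico n0 n by
              ext a; simp; omega]
            simp
          rw [c1, c2, nsmul_eq_mul, nsmul_eq_mul]
          have : ((n - n0 : ℕ) : ℝ) = (n : ℝ) - n0 := by
            push_cast [Nat.cast_sub hn0n.le]; ring
          rw [this]
          have habs : 0 < |h| := by linarith
          nlinarith
      _ ≤ _ := Finset.sum_le_sum hb
  rw [Finset.sum_sub_distrib] at key
  linarith

theorem takagi_dyadic_increment (x : ℝ) (hxD : x ∈ Ddyadic)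
    (n0 : ℕ) (hx : x ∈ Dset (n0 + 1)) (hmin : ∀ m : ℕ, x ∈ Dset (m + 1) → n0 ≤ m) :
    ∀ n : ℕ, 2 * n0 < n → ∀ h : ℝ, 0 < 2 * |h| → 2 * |h| < ((2 : ℝ) ^ n)⁻¹ →
      ((n : ℝ) - 2 * n0) * |h| ≤ T (x + h) - T x :=
  takagi_dyadic_increment' x n0 hx
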